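/- Let J ⊂ S be a quasi-stable monomial ideal with Pommaret basis P(J) = {x^{α(1)},…,x^{α(m)}} and let G = {f_{α(1)},…,f_{α(m)}} be a P(J)-marked basis generating the ideal I. Then every polynomial f ∈ I can be written uniquely in the form f = Σ_{l=1}^m P_l f_{α(l)} with each coefficient P_l a polynomial with variables only among the multiplicative variables of x^{α(l)}. -/

import Mathlib

open MvPolynomial

namespace MB

/-- Exponent (multi-index) of a term in the variables `x_0, …, x_n`. -/
abbrev Exp (n : ℕ) := Fin (n+1) →₀ ℕ

variable {n : ℕ}

/-- Total degree of a term. -/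
def degE (α : Exp n) : ℕ := α.sum fun _ e => e

/-- `x_i` is a multiplicative variable for the term `x^α`, i.e. `x_i ≤ min(x^α)`. -/
def mult (α : Exp n) (i : Fin (n+1)) : Prop := ∀ j ∈ α.support, i ≤ j

/-- Every variable occurring in `x^δ` is multiplicative for `x^α`. -/
def multExp (α δ : Exp n) : Prop := ∀ i ∈ δ.support, mult α i

/-- Pommaret cone of a term. -/
def pommaretCone (α : Exp n) : Set (Exp n) := {γ | ∃ δ, multExp α δ ∧ γ = α + δ}

/-- A set of terms is (the set of terms of) a monomial ideal. -/
def IsMonomialIdeal (T : Set (Exp n)) : Prop := ∀ α ∈ T, ∀ β, α + β ∈ T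

/-- `P` is a Pommaret basis of the set of terms `T`: the terms of `T` are the
disjoint union of the Pommaret cones of the elements of `P`. -/
def IsPommaretBasis (P : Finset (Exp n)) (T : Set (Exp n)) : Prop :=
  (∀ γ, γ ∈ T ↔ ∃ α ∈ P, γ ∈ pommaretCone α) ∧
  ∀ γ : Exp n, ∀ α ∈ P, ∀ β ∈ P, γ ∈ pommaretCone α → γ ∈ pommaretCone β → α = β

/-- Lexicographic order on terms (with `x_n > … > x_0` significance). -/
def lexLt (η δ : Exp n) : Prop := ∃ i, η i < δ i ∧ ∀ j, i < j → η j = δ j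

/-- Terms of the saturation `(J : (x_0,…,x_n)^∞)` of a monomial ideal. -/
def satTerms (T : Set (Exp n)) : Set (Exp n) :=
  {α | ∃ j : ℕ, ∀ β : Exp n, degE β = j → α + β ∈ T}

section ModuleDefs

variable (A : Type*) [CommRing A] {κ : Type*} [Fintype κ] [DecidableEq κ]

/-- The term `x^α e_k` of the free module. -/
noncomputable def termV (α : Exp n) (k : κ) : κ → MvPolynomial (Fin (n+1)) A :=
  Pi.single k (monomial α 1)

variable {A}

/-- Homogeneity of degree `s` in `S^m_d` (with weight vector `d`). -/
def IsHomogV (d : κ → ℤ) (f : κ → MvPolynomial (Fin (n+1)) A) (s : ℤ) : Prop :=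
  ∀ k, ∀ β ∈ (f k).support, (degE β : ℤ) + d k = s

variable (A)

/-- The degree-`s` component `(S^m_d)_s` as an `A`-submodule. -/
noncomputable def homogCompV (d : κ → ℤ) (s : ℤ) :
    Submodule A (κ → MvPolynomial (Fin (n+1)) A) where
  carrier := {f | IsHomogV d f s}
  add_mem' := by
    intro f g hf hg k β hβ
    rcases Finset.mem_union.mp (MvPolynomial.support_add hβ) with h | h
    · exact hf k β h
    · exact hg k β h
  zero_mem' := by intro k β hβ; simp at hβ
  smul_mem' := by
    intro a f hf k β hβ
    exact hf k β (MvPolynomial.support_smul hβ)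

/-- The set `N(U)` of terms of `S^m_d` not belonging to the monomial module `U = ⊕ J^(k) e_k`. -/
def NUTerms (J : κ → Set (Exp n)) : Set (κ → MvPolynomial (Fin (n+1)) A) :=
  {v | ∃ k, ∃ α, α ∉ J k ∧ v = termV A α k}

/-- The degree-`s` part `N(U)_s`. -/
def NUTermsDeg (d : κ → ℤ) (J : κ → Set (Exp n)) (s : ℤ) :
    Set (κ → MvPolynomial (Fin (n+1)) A) :=
  {v | ∃ k, ∃ α, α ∉ J k ∧ (degE α : ℤ) + d k = s ∧ v = termV A α k}

variable {A}

/-- A `P(U)`-marked set: for each `x^α e_k` with `α ∈ P k`, the element `g α k` has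
head term `x^α e_k` (coefficient `1`) and all other terms in `N(U)` of the same degree. -/
def IsMarkedSetV (d : κ → ℤ) (J : κ → Set (Exp n)) (P : κ → Finset (Exp n))
    (g : Exp n → κ → (κ → MvPolynomial (Fin (n+1)) A)) : Prop :=
  ∀ k, ∀ α ∈ P k, ∀ l, ∀ β ∈ ((g α k - termV A α k) l).support,
    β ∉ J l ∧ (degE β : ℤ) + d l = (degE α : ℤ) + d k

/-- The underlying set of elements of the marked set `G`. -/
def GSet (P : κ → Finset (Exp n)) (g : Exp n → κ → (κ → MvPolynomial (Fin (n+1)) A)) :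
    Set (κ → MvPolynomial (Fin (n+1)) A) :=
  {v | ∃ k, ∃ α ∈ P k, v = g α k}

/-- The set `G^(s)` of multiplicative multiples of elements of `G` of degree `s`. -/
def GSdeg (d : κ → ℤ) (P : κ → Finset (Exp n))
    (g : Exp n → κ → (κ → MvPolynomial (Fin (n+1)) A)) (s : ℤ) :
    Set (κ → MvPolynomial (Fin (n+1)) A) :=
  {v | ∃ k, ∃ α ∈ P k, ∃ δ : Exp n, multExp α δ ∧
    (degE δ : ℤ) + (degE α : ℤ) + d k = s ∧ v = (monomial δ (1:A)) • g α k}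

/-- The `S`-submodule `⟨G⟩` generated by the marked set. -/
noncomputable def GmodS (P : κ → Finset (Exp n))
    (g : Exp n → κ → (κ → MvPolynomial (Fin (n+1)) A)) :
    Submodule (MvPolynomial (Fin (n+1)) A) (κ → MvPolynomial (Fin (n+1)) A) :=
  Submodule.span _ (GSet P g)

/-- The degree-`s` component `⟨G⟩_s` as an `A`-submodule. -/
noncomputable def GmodDeg (d : κ → ℤ) (P : κ → Finset (Exp n))
    (g : Exp n → κ → (κ → MvPolynomial (Fin (n+1)) A)) (s : ℤ) :
    Submodule A (κ → MvPolynomial (Fin (n+1)) A) :=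
  (GmodS P g).restrictScalars A ⊓ homogCompV A d s

/-- `G` is a marked basis: `(S^m_d)_s = ⟨G⟩_s ⊕ ⟨N(U)_s⟩^A` for every degree `s`. -/
def MarkedBasisProp (d : κ → ℤ) (J : κ → Set (Exp n)) (P : κ → Finset (Exp n))
    (g : Exp n → κ → (κ → MvPolynomial (Fin (n+1)) A)) : Prop :=
  ∀ s : ℤ,
    homogCompV A d s = GmodDeg d P g s ⊔ Submodule.span A (NUTermsDeg A d J s) ∧
    GmodDeg d P g s ⊓ Submodule.span A (NUTermsDeg A d J s) = ⊥

/-- One step of the reduction relation `→_G`. -/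
def RedStep (P : κ → Finset (Exp n)) (g : Exp n → κ → (κ → MvPolynomial (Fin (n+1)) A))
    (h h' : κ → MvPolynomial (Fin (n+1)) A) : Prop :=
  ∃ k, ∃ α ∈ P k, ∃ η : Exp n, multExp α η ∧
    (h k).coeff (η + α) ≠ 0 ∧
    h' = h - ((h k).coeff (η + α)) • ((monomial η (1:A)) • g α k)

end ModuleDefs

section IdealDefs

variable {A : Type*} [CommRing A]

/-- A `P(J)`-marked set of polynomials. -/
def IsMarkedSetI (T : Set (Exp n)) (P : Finset (Exp n))
    (g : Exp n → MvPolynomial (Fin (n+1)) A) : Prop :=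
  ∀ α ∈ P, ∀ β ∈ (g α - monomial α (1:A)).support, β ∉ T ∧ degE β = degE α

variable (A)

/-- The degree-`s` monomials not in `T`. -/
def NTermsDegI (T : Set (Exp n)) (s : ℕ) : Set (MvPolynomial (Fin (n+1)) A) :=
  {p | ∃ β, β ∉ T ∧ degE β = s ∧ p = monomial β (1:A)}

variable {A}

/-- Degree-`s` part of the ideal generated by the marked set. -/
noncomputable def IdealDegI (P : Finset (Exp n)) (g : Exp n → MvPolynomial (Fin (n+1)) A)
    (s : ℕ) : Submodule A (MvPolynomial (Fin (n+1)) A) :=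
  (Ideal.span (g '' ↑P)).restrictScalars A ⊓ homogeneousSubmodule (Fin (n+1)) A s

/-- A `P(J)`-marked basis of polynomials: `S_s = (G)_s ⊕ ⟨N(J)_s⟩^A` for all `s`. -/
def IsMarkedBasisI (T : Set (Exp n)) (P : Finset (Exp n))
    (g : Exp n → MvPolynomial (Fin (n+1)) A) : Prop :=
  IsMarkedSetI T P g ∧ ∀ s : ℕ,
    homogeneousSubmodule (Fin (n+1)) A s
      = IdealDegI P g s ⊔ Submodule.span A (NTermsDegI A T s) ∧
    IdealDegI P g s ⊓ Submodule.span A (NTermsDegI A T s) = ⊥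

/-- The polynomial `p` involves only multiplicative variables of `x^α`. -/
def multPoly (α : Exp n) (p : MvPolynomial (Fin (n+1)) A) : Prop :=
  ∀ β ∈ p.support, multExp α β

end IdealDefs

section SyzDefs

variable {A : Type*} [CommRing A]

/-- The map `(c_l) ↦ Σ_l c_l f_{α(l)}` whose kernel is `Syz(G)`. -/
noncomputable def syzMap (P : Finset (Exp n)) (g : Exp n → MvPolynomial (Fin (n+1)) A) :
    (↥P → MvPolynomial (Fin (n+1)) A) →ₗ[MvPolynomial (Fin (n+1)) A]
      MvPolynomial (Fin (n+1)) A where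
  toFun c := ∑ l : ↥P, c l * g l.1
  map_add' c c' := by simp [add_mul, Finset.sum_add_distrib]
  map_smul' a c := by simp [Finset.mul_sum, mul_assoc]

/-- Weight vector for the syzygy module: `d_l = deg x^{α(l)}`. -/
def ddeg (P : Finset (Exp n)) : ↥P → ℤ := fun l => (degE l.1 : ℤ)

/-- Terms of the monomial ideal generated by the nonmultiplicative variables of `x^{α(l)}`. -/
def Jsyz (P : Finset (Exp n)) : ↥P → Set (Exp n) :=
  fun l => {β | ∃ i ∈ β.support, ¬ mult (l : Exp n) i}

open Classical in
/-- The claimed Pommaret basis `{x_i e_l : x_i nonmultiplicative for x^{α(l)}}`. -/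
noncomputable def Psyz (P : Finset (Exp n)) : ↥P → Finset (Exp n) := fun l =>
  (Finset.univ.filter fun i : Fin (n+1) => ¬ mult (l : Exp n) i).image
    fun i => Finsupp.single i 1

open Classical in
/-- The syzygy `S_{k;i} = x_i e_k − Σ_l P_l^{k;i} e_l`. -/
noncomputable def Ssyz (P : Finset (Exp n))
    (Pc : ↥P → Fin (n+1) → ↥P → MvPolynomial (Fin (n+1)) A)
    (k : ↥P) (i : Fin (n+1)) : ↥P → MvPolynomial (Fin (n+1)) A :=
  fun l => (if l = k then (X i : MvPolynomial (Fin (n+1)) A) else 0) - Pc k i l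

/-- The set `G_Syz^(s)`. -/
def GSyzDeg (P : Finset (Exp n))
    (Pc : ↥P → Fin (n+1) → ↥P → MvPolynomial (Fin (n+1)) A) (s : ℤ) :
    Set (↥P → MvPolynomial (Fin (n+1)) A) :=
  {v | ∃ k : ↥P, ∃ i : Fin (n+1), ¬ mult (k : Exp n) i ∧ ∃ δ : Exp n,
    (∀ j ∈ δ.support, j ≤ i) ∧ (degE δ : ℤ) + 1 + ddeg P k = s ∧
    v = (monomial δ (1:A)) • Ssyz P Pc k i}

end SyzDefs

section Aux

lemma degE_eq_sum (a : Exp n) : degE a = ∑ i, a i :=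
  Finsupp.sum_fintype _ _ (fun _ => rfl)

lemma degE_eq_degree (a : Exp n) : degE a = a.degree := rfl

lemma degE_add (a b : Exp n) : degE (a + b) = degE a + degE b := by
  simp [degE_eq_sum, Finset.sum_add_distrib]

lemma coord_le_degE (a : Exp n) (i : Fin (n+1)) : a i ≤ degE a := by
  rw [degE_eq_sum]
  exact Finset.single_le_sum (fun j _ => Nat.zero_le _) (Finset.mem_univ i)

lemma lexLt_irrefl (a : Exp n) : ¬ lexLt a a := by
  rintro ⟨i, hi, -⟩; exact lt_irrefl _ hi

lemma lexLt_trans {a b c : Exp n} (h1 : lexLt a b) (h2 : lexLt b c) : lexLt a c := by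
  obtain ⟨i, hi, ha⟩ := h1
  obtain ⟨i', hi', hb⟩ := h2
  rcases lt_trichotomy i i' with h | h | h
  · exact ⟨i', by rw [ha i' h]; exact hi', fun j hj => (ha j (h.trans hj)).trans (hb j hj)⟩
  · subst h; exact ⟨i, hi.trans hi', fun j hj => (ha j hj).trans (hb j hj)⟩
  · exact ⟨i, hi.trans_eq (hb i h), fun j hj => (ha j hj).trans (hb j (h.trans hj))⟩

lemma lexLt_total {a b : Exp n} (h : a ≠ b) : lexLt a b ∨ lexLt b a := by
  classical
  have hne : (Finset.univ.filter (fun j : Fin (n+1) => a j ≠ b j)).Nonempty := by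
    by_contra hc
    rw [Finset.not_nonempty_iff_eq_empty, Finset.filter_eq_empty_iff] at hc
    exact h (Finsupp.ext fun i => not_ne_iff.mp (hc (Finset.mem_univ i)))
  set D := Finset.univ.filter (fun j : Fin (n+1) => a j ≠ b j) with hD
  have hmem := D.max'_mem hne
  set i := D.max' hne with hi
  have habove : ∀ j, i < j → a j = b j := by
    intro j hj
    by_contra hne'
    exact absurd (D.le_max' j (Finset.mem_filter.mpr ⟨Finset.mem_univ j, hne'⟩)) (not_le.mpr hj)
  have hiab : a i ≠ b i := (Finset.mem_filter.mp hmem).2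
  rcases hiab.lt_or_gt with h' | h'
  · exact Or.inl ⟨i, h', habove⟩
  · exact Or.inr ⟨i, h', fun j hj => (habove j hj).symm⟩

instance (a b : Exp n) : Decidable (lexLt a b) := by
  unfold lexLt; infer_instance

/-- A finite set containing all exponents of total degree at most `s`. -/
noncomputable def ES (s : ℕ) : Finset (Exp n) :=
  (Finset.univ : Finset (Fin (n+1) → Fin (s+1))).image
    (fun f => Finsupp.equivFunOnFinite.symm (fun i => (f i : ℕ)))

lemma mem_ES {s : ℕ} {δ : Exp n} (h : degE δ ≤ s) : δ ∈ ES s := by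
  classical
  refine Finset.mem_image.mpr ⟨fun i => ⟨δ i, ?_⟩, Finset.mem_univ _, ?_⟩
  · exact Nat.lt_succ_of_le (le_trans (coord_le_degE δ i) h)
  · apply Finsupp.ext; intro i; simp

noncomputable def mMeas (s : ℕ) (δ : Exp n) : ℕ :=
  ((ES s).filter (fun η => lexLt η δ)).card

lemma mMeas_lt {s : ℕ} {a b : Exp n} (ha : degE a ≤ s) (hab : lexLt a b) :
    mMeas s a < mMeas s b := by
  apply Finset.card_lt_card
  have hsub : (ES s).filter (fun η => lexLt η a) ⊆ (ES s).filter (fun η => lexLt η b) := by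
    intro η hη
    rw [Finset.mem_filter] at *
    exact ⟨hη.1, lexLt_trans hη.2 hab⟩
  rw [Finset.ssubset_iff_of_subset hsub]
  refine ⟨a, Finset.mem_filter.mpr ⟨mem_ES ha, hab⟩, fun hc => ?_⟩
  exact lexLt_irrefl a (Finset.mem_filter.mp hc).2

lemma keyLemma {T : Set (Exp n)} (hT : IsMonomialIdeal T) {α δ μ β : Exp n}
    (hα : α ∈ T) (hmult : multExp α δ) (hβ : β ∉ T) (heq : μ + β = δ + α) :
    lexLt δ μ := by
  by_contra hc
  rcases eq_or_ne δ μ with h | h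
  · subst h
    exact hβ ((add_left_cancel heq : β = α) ▸ hα)
  · rcases lexLt_total h with h' | h'
    · exact hc h'
    · obtain ⟨i, hi, hab⟩ := h'
      have hisupp : i ∈ δ.support := Finsupp.mem_support_iff.mpr (by omega)
      have hialpha : ∀ j ∈ α.support, i ≤ j := hmult i hisupp
      have hle : α ≤ β := by
        rw [Finsupp.le_def]
        intro j
        have hcoord : μ j + β j = δ j + α j := by
          have := DFunLike.congr_fun heq j
          simpa using this
        rcases lt_trichotomy j i with hj | hj | hj
        · have : α j = 0 := by
            by_contra h0
            exact absurd (hialpha j (Finsupp.mem_support_iff.mpr h0)) (not_le.mpr hj)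
          omega
        · subst hj; omega
        · have := hab j hj; omega
      obtain ⟨ρ, hρ⟩ := le_iff_exists_add.mp hle
      exact hβ (hρ ▸ hT α hα ρ)

end Aux

section MainProof

variable {n : ℕ} {A : Type*} [CommRing A]

lemma multPoly_zero (α : Exp n) : multPoly α (0 : MvPolynomial (Fin (n+1)) A) := by
  intro β hβ; simp at hβ

lemma multPoly_add {α : Exp n} {p q : MvPolynomial (Fin (n+1)) A}
    (hp : multPoly α p) (hq : multPoly α q) : multPoly α (p + q) := by
  intro β hβ
  rcases Finset.mem_union.mp (MvPolynomial.support_add hβ) with h | h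
  exacts [hp β h, hq β h]

lemma multPoly_smul {α : Exp n} (a : A) {p : MvPolynomial (Fin (n+1)) A}
    (hp : multPoly α p) : multPoly α (a • p) :=
  fun β hβ => hp β (MvPolynomial.support_smul hβ)

lemma multPoly_sub {α : Exp n} {p q : MvPolynomial (Fin (n+1)) A}
    (hp : multPoly α p) (hq : multPoly α q) : multPoly α (p - q) := by
  rw [sub_eq_add_neg]
  refine multPoly_add hp (fun β hβ => hq β ?_)
  rwa [MvPolynomial.support_neg] at hβ

/-- The set of polynomials admitting a multiplicative representation. -/
noncomputable def RepSub (P : Finset (Exp n)) (g : Exp n → MvPolynomial (Fin (n+1)) A) :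
    Submodule A (MvPolynomial (Fin (n+1)) A) where
  carrier := {f | ∃ c : Exp n → MvPolynomial (Fin (n+1)) A,
    (∀ α ∉ P, c α = 0) ∧ (∀ α ∈ P, multPoly α (c α)) ∧ f = ∑ α ∈ P, c α * g α}
  zero_mem' := ⟨0, fun _ _ => rfl, fun α _ => multPoly_zero α, by simp⟩
  add_mem' := by
    rintro p q ⟨c, hc0, hcm, rfl⟩ ⟨c', hc0', hcm', rfl⟩
    refine ⟨c + c', fun α hα => by simp [hc0 α hα, hc0' α hα],
      fun α hα => multPoly_add (hcm α hα) (hcm' α hα), ?_⟩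
    rw [← Finset.sum_add_distrib]
    exact Finset.sum_congr rfl fun α _ => by simp [add_mul]
  smul_mem' := by
    rintro a p ⟨c, hc0, hcm, rfl⟩
    refine ⟨a • c, fun α hα => by simp [hc0 α hα],
      fun α hα => by simpa using multPoly_smul a (hcm α hα), ?_⟩
    rw [Finset.smul_sum]
    exact Finset.sum_congr rfl fun α _ => by simp [smul_mul_assoc]

/-- Generators of the `A`-span of the terms outside `T`. -/
def NVgen (A : Type*) [CommRing A] (T : Set (Exp n)) : Set (MvPolynomial (Fin (n+1)) A) :=
  {p | ∃ β, β ∉ T ∧ p = monomial β (1:A)}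

variable {T : Set (Exp n)} {P : Finset (Exp n)} {g : Exp n → MvPolynomial (Fin (n+1)) A}

lemma P_subset_T (hP : IsPommaretBasis P T) : ∀ α ∈ P, α ∈ T := by
  intro α hα
  refine (hP.1 α).mpr ⟨α, hα, 0, fun i hi => by simp at hi, by simp⟩

lemma supp_g (hGm : IsMarkedSetI T P g) {α : Exp n} (hα : α ∈ P) {ν : Exp n}
    (hν : ν ∈ (g α).support) : ν = α ∨ (ν ∉ T ∧ degE ν = degE α) := by
  by_cases h : ν = α
  · exact Or.inl h
  · refine Or.inr (hGm α hα ν ?_)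
    rw [MvPolynomial.mem_support_iff] at hν ⊢
    rwa [MvPolynomial.coeff_sub, MvPolynomial.coeff_monomial, if_neg (fun he => h he.symm),
      sub_zero]

lemma degE_supp_g (hGm : IsMarkedSetI T P g) {α : Exp n} (hα : α ∈ P) {ν : Exp n}
    (hν : ν ∈ (g α).support) : degE ν = degE α := by
  rcases supp_g hGm hα hν with h | h
  · rw [h]
  · exact h.2

lemma coeff_g_self (hGm : IsMarkedSetI T P g) (hPT : ∀ α ∈ P, α ∈ T) {α : Exp n}
    (hα : α ∈ P) : MvPolynomial.coeff α (g α) = 1 := by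
  have h : α ∉ (g α - monomial α 1).support := fun h => (hGm α hα α h).1 (hPT α hα)
  rw [MvPolynomial.notMem_support_iff, MvPolynomial.coeff_sub, MvPolynomial.coeff_monomial,
    if_pos rfl, sub_eq_zero] at h
  exact h

lemma mon_mem_sup (hT : IsMonomialIdeal T) (hP : IsPommaretBasis P T)
    (hGm : IsMarkedSetI T P g) :
    ∀ (k s : ℕ) (α δ : Exp n), α ∈ P → multExp α δ → degE α + degE δ = s →
      mMeas s δ < k →
      monomial (α + δ) (1:A) ∈ RepSub P g ⊔ Submodule.span A (NVgen A T) := by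
  intro k
  induction k with
  | zero => intro s α δ _ _ _ h; omega
  | succ k ih =>
    intro s α δ hα hδ hdeg hm
    classical
    have hPT := P_subset_T hP
    set tα := g α - monomial α 1 with htα
    have hid : monomial (α + δ) (1:A)
        = monomial δ 1 * g α - ∑ β ∈ tα.support, (tα.coeff β) • monomial (δ + β) (1:A) := by
      have h1 : monomial δ (1:A) * tα
          = ∑ β ∈ tα.support, (tα.coeff β) • monomial (δ + β) (1:A) := by
        conv_lhs => rw [tα.as_sum]
        rw [Finset.mul_sum]
        refine Finset.sum_congr rfl fun β hβ => ?_
        rw [MvPolynomial.monomial_mul, MvPolynomial.smul_monomial]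
        simp
      have h2 : g α = monomial α 1 + tα := by rw [htα]; ring
      rw [h2, mul_add, h1, MvPolynomial.monomial_mul, one_mul, add_comm δ α]
      ring
    rw [hid]
    refine sub_mem ?_ (Submodule.sum_mem _ fun β hβ => Submodule.smul_mem _ _ ?_)
    · apply Submodule.mem_sup_left
      refine ⟨fun α' => if α' = α then monomial δ 1 else 0, fun α' hα' => ?_, fun α' hα' => ?_, ?_⟩
      · show (if α' = α then monomial δ (1:A) else 0) = 0
        rw [if_neg]; rintro rfl; exact hα' hα
      · show multPoly α' (if α' = α then monomial δ (1:A) else 0)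
        by_cases h : α' = α
        · subst h
          rw [if_pos rfl]
          intro β hβ
          have : β = δ := by
            have := MvPolynomial.support_monomial_subset hβ
            simpa using this
          subst this; exact hδ
        · rw [if_neg h]; exact multPoly_zero α'
      · have : ∀ α' ∈ P, (fun a => if a = α then monomial δ (1:A) else 0) α' * g α'
            = if α' = α then monomial δ 1 * g α' else 0 := by
          intro α' _
          show (if α' = α then monomial δ (1:A) else 0) * g α' = _
          rw [ite_mul, zero_mul]
        rw [Finset.sum_congr rfl this,
          Finset.sum_ite_eq' P α (fun α' => monomial δ 1 * g α'), if_pos hα]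
    · have hβprop := hGm α hα β hβ
      by_cases hmem : (δ + β) ∈ T
      · obtain ⟨α', hα', δ', hδ', heq⟩ := (hP.1 (δ + β)).mp hmem
        have hkey : lexLt δ' δ := by
          refine keyLemma hT (hPT α' hα') hδ' hβprop.1 ?_
          rw [heq]; exact add_comm _ _
        have hdeg' : degE α' + degE δ' = s := by
          have h3 := congrArg degE heq
          rw [degE_add, degE_add] at h3
          have := hβprop.2
          omega
        have hlt : mMeas s δ' < k := by
          have h4 : degE δ' ≤ s := by omega
          exact lt_of_lt_of_le (mMeas_lt h4 hkey) (Nat.lt_succ_iff.mp hm)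
        have := ih s α' δ' hα' hδ' hdeg' hlt
        rwa [← heq] at this
      · exact Submodule.mem_sup_right (Submodule.subset_span ⟨δ + β, hmem, rfl⟩)

lemma all_mem_sup (hT : IsMonomialIdeal T) (hP : IsPommaretBasis P T)
    (hGm : IsMarkedSetI T P g) (f : MvPolynomial (Fin (n+1)) A) :
    f ∈ RepSub P g ⊔ Submodule.span A (NVgen A T) := by
  rw [f.as_sum]
  refine Submodule.sum_mem _ fun γ _ => ?_
  have h1 : monomial γ (MvPolynomial.coeff γ f)
      = (MvPolynomial.coeff γ f) • monomial γ (1:A) := by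
    rw [MvPolynomial.smul_monomial, smul_eq_mul, mul_one]
  rw [h1]
  refine Submodule.smul_mem _ _ ?_
  by_cases hγT : γ ∈ T
  · obtain ⟨α, hα, δ, hδ, rfl⟩ := (hP.1 γ).mp hγT
    exact mon_mem_sup hT hP hGm (mMeas (degE α + degE δ) δ + 1) _ α δ hα hδ rfl
      (Nat.lt_succ_self _)
  · exact Submodule.mem_sup_right (Submodule.subset_span ⟨γ, hγT, rfl⟩)

lemma homComp_mul {q gp : MvPolynomial (Fin (n+1)) A} {d : ℕ}
    (hg : ∀ ν ∈ gp.support, degE ν = d) (s : ℕ) :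
    ∃ q', homogeneousComponent s (q * gp) = q' * gp := by
  classical
  by_cases hds : d ≤ s
  · refine ⟨homogeneousComponent (s - d) q, ?_⟩
    ext γ
    rw [coeff_homogeneousComponent, MvPolynomial.coeff_mul, MvPolynomial.coeff_mul]
    have hterm : ∀ x ∈ Finset.HasAntidiagonal.antidiagonal γ,
        MvPolynomial.coeff x.1 (homogeneousComponent (s - d) q) * MvPolynomial.coeff x.2 gp
        = if γ.degree = s then MvPolynomial.coeff x.1 q * MvPolynomial.coeff x.2 gp else 0 := by
      intro x hx
      have hxsum : x.1 + x.2 = γ := Finset.HasAntidiagonal.mem_antidiagonal.mp hx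
      rw [coeff_homogeneousComponent]
      by_cases hgx : MvPolynomial.coeff x.2 gp = 0
      · simp [hgx]
      · have hd2 : degE x.2 = d := hg x.2 (MvPolynomial.mem_support_iff.mpr hgx)
        have hadd : degE x.1 + degE x.2 = degE γ := by rw [← degE_add, hxsum]
        have : (x.1.degree = s - d) ↔ (γ.degree = s) := by
          rw [← degE_eq_degree, ← degE_eq_degree]
          omega
        by_cases hγ : γ.degree = s
        · rw [if_pos hγ, if_pos (this.mpr hγ)]
        · rw [if_neg hγ, if_neg (fun hc => hγ (this.mp hc)), zero_mul]
    rw [Finset.sum_congr rfl hterm]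
    by_cases hγ : γ.degree = s
    · rw [if_pos hγ]
      exact Finset.sum_congr rfl fun x _ => (if_pos hγ).symm
    · rw [if_neg hγ, Finset.sum_eq_zero fun x _ => if_neg hγ]
  · refine ⟨0, ?_⟩
    rw [zero_mul]
    ext γ
    rw [coeff_homogeneousComponent, MvPolynomial.coeff_zero]
    by_cases hγ : γ.degree = s
    · rw [if_pos hγ, MvPolynomial.coeff_mul]
      refine Finset.sum_eq_zero fun x hx => ?_
      by_cases hgx : MvPolynomial.coeff x.2 gp = 0
      · rw [hgx, mul_zero]
      · exfalso
        have hd2 : degE x.2 = d := hg x.2 (MvPolynomial.mem_support_iff.mpr hgx)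
        have hxsum : x.1 + x.2 = γ := Finset.HasAntidiagonal.mem_antidiagonal.mp hx
        have hadd : degE x.1 + degE x.2 = degE γ := by rw [← degE_add, hxsum]
        have hγ' : degE γ = s := by rw [degE_eq_degree]; exact hγ
        omega
    · rw [if_neg hγ]

lemma homComp_mem_ideal (hGm : IsMarkedSetI T P g)
    {f : MvPolynomial (Fin (n+1)) A} (hf : f ∈ Ideal.span (g '' ↑P)) (s : ℕ) :
    homogeneousComponent s f ∈ Ideal.span (g '' ↑P) := by
  classical
  have himg : g '' ↑P = Set.range (fun l : ↥P => g l.1) := by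
    ext x
    constructor
    · rintro ⟨α, hα, rfl⟩; exact ⟨⟨α, hα⟩, rfl⟩
    · rintro ⟨⟨α, hα⟩, rfl⟩; exact ⟨α, hα, rfl⟩
  rw [himg] at hf ⊢
  obtain ⟨q, hq⟩ := Ideal.mem_span_range_iff_exists_fun.mp hf
  rw [← hq, map_sum]
  refine Ideal.sum_mem _ fun l _ => ?_
  obtain ⟨q', hq'⟩ := homComp_mul (q := q l) (gp := g l.1) (d := degE l.1)
    (fun ν hν => degE_supp_g hGm l.2 hν) s
  rw [hq']
  exact Ideal.mul_mem_left _ _ (Ideal.subset_span ⟨l, rfl⟩)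

lemma homComp_monomial_cases (β : Exp n) (a : A) (s : ℕ) :
    homogeneousComponent s (monomial β a)
      = if degE β = s then monomial β a else 0 := by
  classical
  ext γ
  simp only [coeff_homogeneousComponent, apply_ite (MvPolynomial.coeff γ),
    MvPolynomial.coeff_monomial, MvPolynomial.coeff_zero]
  by_cases hγβ : β = γ
  · subst hγβ; simp [degE_eq_degree]
  · simp [hγβ]

lemma homComp_NV {v : MvPolynomial (Fin (n+1)) A}
    (hv : v ∈ Submodule.span A (NVgen A T)) (s : ℕ) :
    homogeneousComponent s v ∈ Submodule.span A (NTermsDegI A T s) := by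
  induction hv using Submodule.span_induction with
  | mem x hx =>
    obtain ⟨β, hβ, rfl⟩ := hx
    rw [homComp_monomial_cases]
    by_cases h : degE β = s
    · rw [if_pos h]
      exact Submodule.subset_span ⟨β, hβ, h, rfl⟩
    · rw [if_neg h]; exact zero_mem _
  | zero => rw [map_zero]; exact zero_mem _
  | add x y _ _ hx hy => rw [map_add]; exact add_mem hx hy
  | smul a x _ hx => rw [map_smul]; exact Submodule.smul_mem _ _ hx

lemma NV_inter_ideal (hGm : IsMarkedSetI T P g)
    (hbot : ∀ s : ℕ, IdealDegI P g s ⊓ Submodule.span A (NTermsDegI A T s) = ⊥)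
    {v : MvPolynomial (Fin (n+1)) A} (hv1 : v ∈ Ideal.span (g '' ↑P))
    (hv2 : v ∈ Submodule.span A (NVgen A T)) : v = 0 := by
  have hall : ∀ s, homogeneousComponent s v = 0 := by
    intro s
    have h1 : homogeneousComponent s v ∈ IdealDegI P g s :=
      Submodule.mem_inf.mpr ⟨homComp_mem_ideal hGm hv1 s, homogeneousComponent_mem s v⟩
    have h2 := homComp_NV hv2 s
    have h3 : homogeneousComponent s v ∈ (⊥ : Submodule A (MvPolynomial (Fin (n+1)) A)) := by
      rw [← hbot s]; exact Submodule.mem_inf.mpr ⟨h1, h2⟩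
    simpa using h3
  calc v = ∑ i ∈ Finset.range (v.totalDegree + 1), homogeneousComponent i v :=
        (sum_homogeneousComponent v).symm
    _ = 0 := Finset.sum_eq_zero fun i _ => hall i

lemma rep_unique (hT : IsMonomialIdeal T) (hP : IsPommaretBasis P T)
    (hGm : IsMarkedSetI T P g)
    {e : Exp n → MvPolynomial (Fin (n+1)) A}
    (he0 : ∀ α ∉ P, e α = 0) (hem : ∀ α ∈ P, multPoly α (e α))
    (hsum : ∑ α ∈ P, e α * g α = 0) : ∀ α, e α = 0 := by
  classical
  by_contra hc
  push_neg at hc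
  obtain ⟨α0, hα0⟩ := hc
  have hα0P : α0 ∈ P := by by_contra h; exact hα0 (he0 α0 h)
  have hPT := P_subset_T hP
  set D : Finset (Exp n) := P.biUnion (fun α => (e α).support) with hD
  have hDne : D.Nonempty := by
    obtain ⟨δ0, hδ0⟩ := (MvPolynomial.support_nonempty.mpr hα0)
    exact ⟨δ0, Finset.mem_biUnion.mpr ⟨α0, hα0P, hδ0⟩⟩
  set s := D.sup degE with hs
  obtain ⟨δs, hδsD, hmax⟩ := D.exists_max_image (mMeas s) hDne
  obtain ⟨αs, hαsP, hδs⟩ := Finset.mem_biUnion.mp hδsD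
  have hδsdeg : degE δs ≤ s := Finset.le_sup hδsD
  have hmultδs : multExp αs δs := hem αs hαsP δs hδs
  -- key : tail contributions vanish
  have htail : ∀ α ∈ P, ∀ x ∈ Finset.HasAntidiagonal.antidiagonal (αs + δs), x.2 ≠ α →
      MvPolynomial.coeff x.1 (e α) * MvPolynomial.coeff x.2 (g α) = 0 := by
    intro α hαP x hx hne
    by_contra hterm
    have h1 : MvPolynomial.coeff x.1 (e α) ≠ 0 := left_ne_zero_of_mul hterm
    have h2 : MvPolynomial.coeff x.2 (g α) ≠ 0 := right_ne_zero_of_mul hterm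
    have hx2 : x.2 ∉ T := by
      rcases supp_g hGm hαP (MvPolynomial.mem_support_iff.mpr h2) with h | h
      · exact absurd h hne
      · exact h.1
    have hxsum : x.1 + x.2 = δs + αs := by
      rw [Finset.HasAntidiagonal.mem_antidiagonal.mp hx]; exact add_comm _ _
    have hkey : lexLt δs x.1 := keyLemma hT (hPT αs hαsP) hmultδs hx2 hxsum
    have hx1D : x.1 ∈ D := Finset.mem_biUnion.mpr ⟨α, hαP, MvPolynomial.mem_support_iff.mpr h1⟩
    exact absurd (hmax x.1 hx1D) (not_le.mpr (mMeas_lt hδsdeg hkey))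
  have hcoeff : ∀ α ∈ P, MvPolynomial.coeff (αs + δs) (e α * g α)
      = if α = αs then MvPolynomial.coeff δs (e αs) else 0 := by
    intro α hαP
    rw [MvPolynomial.coeff_mul]
    by_cases h : α = αs
    · subst h
      rw [if_pos rfl]
      rw [Finset.sum_eq_single (δs, α)]
      · rw [coeff_g_self hGm hPT hαP, mul_one]
      · intro x hx hxne
        by_cases h2 : x.2 = α
        · exfalso
          apply hxne
          have hxsum : x.1 + x.2 = α + δs := Finset.HasAntidiagonal.mem_antidiagonal.mp hx
          rw [h2] at hxsum
          have : x.1 = δs := by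
            have : x.1 + α = α + δs := hxsum
            rw [add_comm α δs] at this
            exact add_right_cancel this
          rw [Prod.ext_iff]; exact ⟨this, h2⟩
        · exact htail α hαP x hx h2
      · intro hnot
        exfalso
        exact hnot (Finset.HasAntidiagonal.mem_antidiagonal.mpr (add_comm δs α))
    · rw [if_neg h]
      refine Finset.sum_eq_zero fun x hx => ?_
      by_cases h2 : x.2 = α
      · by_cases h1 : MvPolynomial.coeff x.1 (e α) = 0
        · rw [h1, zero_mul]
        · exfalso
          apply h
          have hmultx : multExp α x.1 := hem α hαP x.1 (MvPolynomial.mem_support_iff.mpr h1)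
          have hcone1 : (αs + δs : Exp n) ∈ pommaretCone α := by
            refine ⟨x.1, hmultx, ?_⟩
            rw [← Finset.HasAntidiagonal.mem_antidiagonal.mp hx, h2, add_comm]
          have hcone2 : (αs + δs : Exp n) ∈ pommaretCone αs := ⟨δs, hmultδs, rfl⟩
          exact hP.2 (αs + δs) α hαP αs hαsP hcone1 hcone2
      · exact htail α hαP x hx h2
  have hzero : MvPolynomial.coeff (αs + δs) (∑ α ∈ P, e α * g α)
      = MvPolynomial.coeff δs (e αs) := by
    rw [MvPolynomial.coeff_sum, Finset.sum_congr rfl hcoeff,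
      Finset.sum_ite_eq' P αs (fun _ => MvPolynomial.coeff δs (e αs)), if_pos hαsP]
  rw [hsum, MvPolynomial.coeff_zero] at hzero
  exact (MvPolynomial.mem_support_iff.mp hδs) hzero.symm

end MainProof


/-- Lemma `uniqueStRep`: every `f` in the ideal generated by a
`P(J)`-marked basis `G` has a unique representation `f = Σ_l P_l f_{α(l)}` with each
`P_l` involving only the multiplicative variables of `x^{α(l)}`. -/
theorem statement14 {n : ℕ} {A : Type*} [CommRing A] [IsNoetherianRing A]
    (T : Set (Exp n)) (P : Finset (Exp n))
    (hT : IsMonomialIdeal T) (hP : IsPommaretBasis P T)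
    (g : Exp n → MvPolynomial (Fin (n+1)) A) (hG : IsMarkedBasisI T P g) :
    ∀ f ∈ Ideal.span (g '' ↑P),
      ∃! c : Exp n → MvPolynomial (Fin (n+1)) A,
        (∀ α ∉ P, c α = 0) ∧ (∀ α ∈ P, multPoly α (c α)) ∧
        f = ∑ α ∈ P, c α * g α := by
  classical
  intro f hf
  have hPT := P_subset_T hP
  obtain ⟨r, hr, v, hv, hrv⟩ := Submodule.mem_sup.mp (all_mem_sup hT hP hG.1 f)
  obtain ⟨c, hc0, hcm, hceq⟩ := hr
  have hrI : r ∈ Ideal.span (g '' ↑P) := by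
    rw [hceq]
    exact Ideal.sum_mem _ fun α hα => Ideal.mul_mem_left _ _
      (Ideal.subset_span ⟨α, hα, rfl⟩)
  have hvI : v ∈ Ideal.span (g '' ↑P) := by
    have hveq : v = f - r := by rw [← hrv]; ring
    rw [hveq]
    exact Ideal.sub_mem _ hf hrI
  have hv0 : v = 0 := NV_inter_ideal hG.1 (fun s => (hG.2 s).2) hvI hv
  have hfr : f = r := by rw [← hrv, hv0, add_zero]
  refine ⟨c, ⟨hc0, hcm, by rw [hfr, hceq]⟩, ?_⟩
  rintro c' ⟨hc0', hcm', hceq'⟩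
  have hzero : ∀ α, c' α - c α = 0 := by
    refine rep_unique hT hP hG.1 (e := fun α => c' α - c α)
      (fun α hα => by show c' α - c α = 0; rw [hc0 α hα, hc0' α hα, sub_zero]) ?_ ?_
    · exact fun α hα => multPoly_sub (hcm' α hα) (hcm α hα)
    · show (∑ α ∈ P, (c' α - c α) * g α) = 0
      have : ∀ α ∈ P, (c' α - c α) * g α = c' α * g α - c α * g α :=
        fun α _ => sub_mul _ _ _
      rw [Finset.sum_congr rfl this, Finset.sum_sub_distrib, ← hceq', ← hceq, ← hfr, sub_self]
  funext α
  exact sub_eq_zero.mp (hzero α)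


end MB
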